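/- (F Bayes factor.) For every k > 0, m > 0, τ > 0, r ≥ 1 and f > 0: ∫_0^∞ q_{k,m}(f|λ) · γ(λ; k/2+r, 1/(2τ²)) dλ = q_{k,m}(f|0) · (1+τ²)^{−(k/2+r)} · ₂F₁(k/2+r, (k+m)/2, k/2; kfτ²/((1+τ²)(m+kf))). Equivalently, the F Bayes factor BF₁₀(f|τ²,r) = (∫_0^∞ q_{k,m}(f|λ) γ(λ; k/2+r, 1/(2τ²)) dλ)/q_{k,m}(f|0) equals (1+τ²)^{−(k/2+r)} ₂F₁(k/2+r, (k+m)/2, k/2; kfτ²/((1+τ²)(m+kf))). -/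

import Mathlib

open Real MeasureTheory Filter

/-- Rising factorial (Pochhammer symbol) `(a)_k`. -/
noncomputable def risingFac (a : ℝ) (k : ℕ) : ℝ := (ascPochhammer ℝ k).eval a

/-- Gaussian hypergeometric function `₂F₁(a, b, c; x)` (as a series). -/
noncomputable def twoF1 (a b c x : ℝ) : ℝ :=
  ∑' k : ℕ, (risingFac a k * risingFac b k / (risingFac c k * (Nat.factorial k : ℝ))) * x ^ k

/-- Noncentral `F` density with `(k, m)` degrees of freedom and noncentrality `lam`. -/
noncomputable def ncFPdf (k m lam f : ℝ) : ℝ :=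
  ∑' i : ℕ, Real.exp (-lam / 2) * (lam / 2) ^ i / (Nat.factorial i : ℝ) *
    (Real.Gamma ((k + m) / 2 + i) / (Real.Gamma (k / 2 + i) * Real.Gamma (m / 2))) *
    (k / m) ^ (k / 2 + (i : ℝ)) * f ^ (k / 2 + (i : ℝ) - 1) *
    (1 + k * f / m) ^ (-(k + m) / 2 - (i : ℝ))

/-- Gamma density with shape `α` and rate `b`. -/
noncomputable def gammaPdf (α b lam : ℝ) : ℝ :=
  b ^ α * lam ^ (α - 1) * Real.exp (-b * lam) / Real.Gamma α

lemma risingFac_succ (a : ℝ) (n : ℕ) : risingFac a (n+1) = risingFac a n * (a + n) := by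
  simp [risingFac, ascPochhammer_succ_eval]

lemma risingFac_pos {a : ℝ} (ha : 0 < a) (n : ℕ) : 0 < risingFac a n :=
  ascPochhammer_pos n a ha

lemma Gamma_add_nat {a : ℝ} (ha : 0 < a) (n : ℕ) :
    Real.Gamma (a + n) = Real.Gamma a * risingFac a n := by
  induction n with
  | zero => simp [risingFac]
  | succ n ih =>
      have hn : (0:ℝ) ≤ n := Nat.cast_nonneg n
      have h : a + ((n+1 : ℕ) : ℝ) = (a + n) + 1 := by push_cast; ring
      rw [h, Real.Gamma_add_one (by linarith : (0:ℝ) < a + n).ne', ih, risingFac_succ]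
      ring

lemma tendsto_ratio_aux (a c : ℝ) :
    Tendsto (fun n : ℕ => (a + n) / (c + n)) atTop (nhds 1) := by
  have h2 : Tendsto (fun n : ℕ => c + (n:ℝ)) atTop atTop :=
    tendsto_atTop_add_const_left _ _ tendsto_natCast_atTop_atTop
  have h : Tendsto (fun n : ℕ => 1 + (a - c) / (c + n)) atTop (nhds 1) := by
    simpa using tendsto_const_nhds.add (Tendsto.div_atTop tendsto_const_nhds h2)
  apply h.congr'
  filter_upwards [eventually_ge_atTop (⌈|c|⌉₊ + 1)] with n hn
  have h1 : |c| ≤ (⌈|c|⌉₊ : ℝ) := Nat.le_ceil _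
  have h3 : ((⌈|c|⌉₊ + 1 : ℕ) : ℝ) ≤ n := Nat.cast_le.mpr hn
  have h4 : (0:ℝ) < c + n := by
    push_cast at h3
    have := abs_le.mp (le_refl |c|)
    nlinarith [neg_abs_le c]
  field_simp
  ring

lemma ncFPdf_zero (k m f : ℝ) :
    ncFPdf k m 0 f = Real.Gamma ((k + m) / 2) / (Real.Gamma (k / 2) * Real.Gamma (m / 2)) *
      (k / m) ^ (k / 2) * f ^ (k / 2 - 1) * (1 + k * f / m) ^ (-(k + m) / 2) := by
  rw [ncFPdf, tsum_eq_single 0]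
  · norm_num
  · intro i hi
    have h0 : ((0:ℝ)/2) ^ i = 0 := by rw [zero_div]; exact zero_pow hi
    simp only [h0, zero_pow hi, mul_zero, zero_div, zero_mul]

set_option maxHeartbeats 2000000 in
/-- Theorem 2.6: `F` Bayes factor. -/
theorem F_bayes_factor (k m τ r f : ℝ) (hk : 0 < k) (hm : 0 < m) (hτ : 0 < τ) (hr : 1 ≤ r)
    (hf : 0 < f) :
    ∫ l in Set.Ioi (0 : ℝ), ncFPdf k m l f * gammaPdf (k / 2 + r) (1 / (2 * τ ^ 2)) l
      = ncFPdf k m 0 f * (1 + τ ^ 2) ^ (-(k / 2 + r)) *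
          twoF1 (k / 2 + r) ((k + m) / 2) (k / 2)
            (k * f * τ ^ 2 / ((1 + τ ^ 2) * (m + k * f))) := by
  set α := k / 2 + r with hα
  set b := 1 / (2 * τ ^ 2) with hbdef
  set x := k * f * τ ^ 2 / ((1 + τ ^ 2) * (m + k * f)) with hxdef
  set c := b + 1/2 with hcdef
  -- basic positivity
  have hτ2 : (0:ℝ) < τ ^ 2 := by positivity
  have hb0 : (0:ℝ) < b := by rw [hbdef]; positivity
  have hc0 : (0:ℝ) < c := by rw [hcdef]; linarith
  have h1τ : (0:ℝ) < 1 + τ ^ 2 := by linarith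
  have hα0 : (0:ℝ) < α := by rw [hα]; linarith
  have hk2 : (0:ℝ) < k / 2 := by linarith
  have hm2 : (0:ℝ) < m / 2 := by linarith
  have hkm2 : (0:ℝ) < (k + m) / 2 := by linarith
  have hmkf : (0:ℝ) < m + k * f := by nlinarith
  have hq0 : (0:ℝ) < 1 + k * f / m := by
    have : 0 < k * f / m := by positivity
    linarith
  have hx0 : (0:ℝ) < x := by rw [hxdef]; positivity
  have hx1 : x < 1 := by
    rw [hxdef, div_lt_one (by positivity)]
    nlinarith
  -- the series pieces
  set P : ℕ → ℝ := fun i =>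
    risingFac α i * risingFac ((k + m) / 2) i / (risingFac (k / 2) i * (Nat.factorial i : ℝ))
    with hP
  set D := Real.Gamma ((k + m) / 2) / (Real.Gamma (k / 2) * Real.Gamma (m / 2)) *
      (k / m) ^ (k / 2) * f ^ (k / 2 - 1) * (1 + k * f / m) ^ (-(k + m) / 2) with hD
  set CC := D * (1 + τ ^ 2) ^ (-α) with hCC
  set F : ℕ → ℝ → ℝ := fun i l =>
    Real.exp (-l / 2) * (l / 2) ^ i / (Nat.factorial i : ℝ) *
      (Real.Gamma ((k + m) / 2 + i) / (Real.Gamma (k / 2 + i) * Real.Gamma (m / 2))) *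
      (k / m) ^ (k / 2 + (i : ℝ)) * f ^ (k / 2 + (i : ℝ) - 1) *
      (1 + k * f / m) ^ (-(k + m) / 2 - (i : ℝ)) * gammaPdf α b l with hF
  clear_value α b x c P D CC F
  have hpoint : ∀ l : ℝ, ncFPdf k m l f * gammaPdf α b l = ∑' i, F i l := by
    intro l
    simp only [hF, ncFPdf, ← tsum_mul_right]
  -- per-index computation
  have key : ∀ i : ℕ, IntegrableOn (F i) (Set.Ioi 0) ∧
      (∫ l in Set.Ioi (0:ℝ), ‖F i l‖) = CC * (P i * x ^ i) ∧
      (∫ l in Set.Ioi (0:ℝ), F i l) = CC * (P i * x ^ i) := by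
    intro i
    have hi0 : (0:ℝ) ≤ i := Nat.cast_nonneg i
    set K := Real.Gamma ((k+m)/2 + i) / (Real.Gamma (k/2 + i) * Real.Gamma (m/2)) *
        (k/m) ^ (k/2 + (i:ℝ)) * f ^ (k/2 + (i:ℝ) - 1) *
        (1 + k*f/m) ^ (-(k+m)/2 - (i:ℝ)) * b ^ α /
        ((Nat.factorial i : ℝ) * 2 ^ i * Real.Gamma α) with hK
    set G : ℝ → ℝ := fun l => l ^ (α + (i:ℝ) - 1) * Real.exp (-(c * l)) with hG
    clear_value K G
    have hGa1 : (0:ℝ) < Real.Gamma ((k+m)/2 + i) := Real.Gamma_pos_of_pos (by linarith)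
    have hGa2 : (0:ℝ) < Real.Gamma (k/2 + i) := Real.Gamma_pos_of_pos (by linarith)
    have hGa3 : (0:ℝ) < Real.Gamma (m/2) := Real.Gamma_pos_of_pos hm2
    have hGa4 : (0:ℝ) < Real.Gamma α := Real.Gamma_pos_of_pos hα0
    have h5 : (0:ℝ) < (k/m) ^ (k/2 + (i:ℝ)) := rpow_pos_of_pos (div_pos hk hm) _
    have h6 : (0:ℝ) < f ^ (k/2 + (i:ℝ) - 1) := rpow_pos_of_pos hf _
    have h7 : (0:ℝ) < (1 + k*f/m) ^ (-(k+m)/2 - (i:ℝ)) := rpow_pos_of_pos hq0 _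
    have h8 : (0:ℝ) < b ^ α := rpow_pos_of_pos hb0 _
    have h9 : (0:ℝ) < (Nat.factorial i : ℝ) := Nat.cast_pos.mpr i.factorial_pos
    have hKpos : 0 < K := by
      rw [hK]
      exact div_pos (mul_pos (mul_pos (mul_pos (mul_pos
        (div_pos hGa1 (mul_pos hGa2 hGa3)) h5) h6) h7) h8)
        (mul_pos (mul_pos h9 (by positivity)) hGa4)
    have heqFG : ∀ l ∈ Set.Ioi (0:ℝ), K * G l = F i l := by
      intro l hl
      have hl0 : (0:ℝ) < l := hl
      simp only [hF, hG, hK, gammaPdf]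
      have e1 : (l/2:ℝ) ^ i = l ^ i / 2 ^ i := div_pow l 2 i
      have e3 : l ^ (α + (i:ℝ) - 1) = l ^ (α - 1) * l ^ (i:ℝ) := by
        rw [← rpow_add hl0]; ring_nf
      have e4 : Real.exp (-(c * l)) = Real.exp (-l/2) * Real.exp (-b * l) := by
        rw [← Real.exp_add, hcdef]; congr 1; ring
      have e2 : (l:ℝ) ^ i = l ^ (i:ℝ) := (rpow_natCast l i).symm
      rw [e3, e4, e1, e2]
      ring
    have hGint : IntegrableOn G (Set.Ioi 0) := by
      have h := integrableOn_rpow_mul_exp_neg_mul_rpow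
        (s := α + (i:ℝ) - 1) (p := 1) (b := c) (by linarith) one_pos hc0
      apply h.congr_fun _ measurableSet_Ioi
      intro l hl
      simp only [hG, Real.rpow_one, neg_mul]
    have hGval : ∫ l in Set.Ioi (0:ℝ), G l = (1/c) ^ (α + (i:ℝ)) * Real.Gamma (α + (i:ℝ)) := by
      rw [hG]
      exact integral_rpow_mul_exp_neg_mul_Ioi (by linarith) hc0
    have hFint : IntegrableOn (F i) (Set.Ioi 0) :=
      IntegrableOn.congr_fun (hGint.const_mul K) heqFG measurableSet_Ioi
    have hFval : ∫ l in Set.Ioi (0:ℝ), F i l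
        = K * ((1/c) ^ (α + (i:ℝ)) * Real.Gamma (α + (i:ℝ))) := by
      rw [← setIntegral_congr_fun measurableSet_Ioi heqFG, integral_const_mul, hGval]
    have hGnn : ∀ l ∈ Set.Ioi (0:ℝ), 0 ≤ G l := by
      intro l hl
      have hl0 : (0:ℝ) < l := hl
      rw [hG]
      exact mul_nonneg (rpow_nonneg hl0.le _) (Real.exp_pos _).le
    have hFnorm : ∫ l in Set.Ioi (0:ℝ), ‖F i l‖
        = K * ((1/c) ^ (α + (i:ℝ)) * Real.Gamma (α + (i:ℝ))) := by
      rw [← hFval]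
      refine setIntegral_congr_fun measurableSet_Ioi (fun l hl => ?_)
      rw [Real.norm_of_nonneg]
      rw [← heqFG l hl]
      exact mul_nonneg hKpos.le (hGnn l hl)
    have halg : K * ((1/c) ^ (α + (i:ℝ)) * Real.Gamma (α + (i:ℝ))) = CC * (P i * x ^ i) := by
      have hbase : (k/m) * f * (1 + k*f/m)⁻¹ * (1/c) / 2 = x := by
        rw [hcdef, hbdef, hxdef]
        field_simp
      have hbc : b ^ α * (1/c) ^ α = (1 + τ^2) ^ (-α) := by
        rw [← mul_rpow hb0.le (by positivity),
          show b * (1/c) = (1+τ^2)⁻¹ by rw [hbdef, hcdef, hbdef]; field_simp,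
          inv_rpow h1τ.le, ← rpow_neg h1τ.le]
      simp only [hK, hCC, hD, hP]
      rw [Gamma_add_nat hα0 i, Gamma_add_nat hkm2 i, Gamma_add_nat hk2 i,
        rpow_add (div_pos hk hm) (k/2) (i:ℝ),
        show k/2 + (i:ℝ) - 1 = (k/2 - 1) + (i:ℝ) by ring,
        rpow_add hf,
        show -(k+m)/2 - (i:ℝ) = -(k+m)/2 + (-(i:ℝ)) by ring,
        rpow_add hq0, rpow_neg hq0.le,
        rpow_add (one_div_pos.mpr hc0) α (i:ℝ)]
      simp only [rpow_natCast]
      have hxpow : x ^ i = (k/m)^i * f^i * ((1 + k*f/m)^i)⁻¹ * (c^i)⁻¹ * (((2:ℝ))^i)⁻¹ := by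
        rw [← hbase,
          show (k/m) * f * (1 + k*f/m)⁻¹ * (1/c) / 2
            = k/m * f * (1 + k*f/m)⁻¹ * c⁻¹ * 2⁻¹ by ring]
        rw [mul_pow, mul_pow, mul_pow, mul_pow, inv_pow, inv_pow, inv_pow]
      rw [← hbc, hxpow]
      have n1 : Real.Gamma (k/2) ≠ 0 := (Real.Gamma_pos_of_pos hk2).ne'
      have n2 : Real.Gamma (m/2) ≠ 0 := hGa3.ne'
      have n3 : Real.Gamma α ≠ 0 := hGa4.ne'
      have n4 : risingFac (k/2) i ≠ 0 := (risingFac_pos hk2 i).ne'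
      have n5 : (Nat.factorial i : ℝ) ≠ 0 := Nat.cast_ne_zero.mpr i.factorial_ne_zero
      have n6 : (1 + k*f/m) ≠ 0 := hq0.ne'
      have n7 : c ≠ 0 := hc0.ne'
      have n8 : ((2:ℝ)) ≠ 0 := two_ne_zero
      have n9 : (1 + k*f/m)^i ≠ 0 := pow_ne_zero i n6
      have n10 : c^i ≠ 0 := pow_ne_zero i n7
      have n11 : ((2:ℝ))^i ≠ 0 := pow_ne_zero i n8
      field_simp
      ring_nf
      field_simp
      rw [one_div, inv_pow, mul_assoc _ (c ^ i), mul_inv_cancel₀ n10, mul_one]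
    exact ⟨hFint, hFnorm.trans halg, hFval.trans halg⟩
  -- summability of the series
  have hPpos : ∀ i, 0 < P i := by
    intro i
    rw [hP]
    exact div_pos (mul_pos (risingFac_pos hα0 i) (risingFac_pos hkm2 i))
      (mul_pos (risingFac_pos hk2 i) (Nat.cast_pos.mpr i.factorial_pos))
  have hapos : ∀ i, 0 < P i * x ^ i := fun i => mul_pos (hPpos i) (pow_pos hx0 i)
  have hsum : Summable (fun i : ℕ => P i * x ^ i) := by
    have hratio : ∀ i : ℕ, P (i+1) * x ^ (i+1) =
        (P i * x ^ i) * ((α + i) * ((k+m)/2 + i) / ((k/2 + i) * (1 + i)) * x) := by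
      intro i
      have hi0 : (0:ℝ) ≤ i := Nat.cast_nonneg i
      have h1 : risingFac (k/2) i ≠ 0 := (risingFac_pos hk2 i).ne'
      have h2 : (Nat.factorial i : ℝ) ≠ 0 := Nat.cast_ne_zero.mpr i.factorial_ne_zero
      have h3 : (k/2 + (i:ℝ)) ≠ 0 := by linarith
      have h4 : (1 + (i:ℝ)) ≠ 0 := by linarith
      rw [hP]
      simp only []
      rw [risingFac_succ, risingFac_succ, risingFac_succ, Nat.factorial_succ, pow_succ]
      push_cast
      field_simp
      ring
    have heq : (fun i : ℕ => ‖P (i+1) * x^(i+1)‖ / ‖P i * x^i‖)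
        = fun i : ℕ => ((α + i) / (1 + i)) * (((k+m)/2 + i) / (k/2 + i)) * x := by
      funext i
      have hi0 : (0:ℝ) ≤ i := Nat.cast_nonneg i
      have h3 : (k/2 + (i:ℝ)) ≠ 0 := by linarith
      have h4 : (1 + (i:ℝ)) ≠ 0 := by linarith
      rw [Real.norm_of_nonneg (hapos _).le, Real.norm_of_nonneg (hapos i).le, hratio i,
        mul_div_cancel_left₀ _ (hapos i).ne']
      field_simp
    have htendsto : Tendsto (fun i : ℕ => ‖P (i+1) * x^(i+1)‖ / ‖P i * x^i‖) atTop (nhds x) := by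
      rw [heq]
      have := ((tendsto_ratio_aux α 1).mul (tendsto_ratio_aux ((k+m)/2) (k/2))).mul_const x
      simpa using this
    exact summable_of_ratio_test_tendsto_lt_one hx1
      (Eventually.of_forall fun i => (hapos i).ne') htendsto
  have hsum' : Summable (fun i : ℕ => CC * (P i * x ^ i)) := hsum.mul_left CC
  -- swap integral and sum
  have hswap : ∫ l in Set.Ioi (0:ℝ), ncFPdf k m l f * gammaPdf α b l
      = ∑' i, ∫ l in Set.Ioi (0:ℝ), F i l := by
    simp_rw [hpoint]
    exact (integral_tsum_of_summable_integral_norm (fun i => (key i).1)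
      (by simpa only [fun i => (key i).2.1] using hsum')).symm
  rw [hswap]
  have : ∑' i, ∫ l in Set.Ioi (0:ℝ), F i l = CC * ∑' i, P i * x ^ i := by
    simp_rw [fun i => (key i).2.2]
    exact tsum_mul_left
  have htw : twoF1 α ((k+m)/2) (k/2) x = ∑' i, P i * x ^ i := by
    simp only [twoF1, hP]
  rw [this, ncFPdf_zero, htw, hCC, hD]
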